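/- Let R be a complete valuation ring with fraction field K and value group Γ, K₁/K a finite extension of degree d with valuation ord₁ extending ord and value group Γ₁. Let R₀ ⊆ K₁ be a finite R-subalgebra with fraction field K₁, free over R with basis (e₁ = 1, e₂, …, e_d). Define ord₀(∑ xᵢeᵢ) = minᵢ ord(xᵢ) for xᵢ ∈ K. Then the function ord₁ − ord₀ : K₁* → Γ₁ is bounded: there exist γ, γ' ∈ Γ₁ such that γ ≤ ord₁(z) − ord₀(z) ≤ γ' for all z ∈ K₁*. -/

import Mathlib

open Finset Filter

lemma aux_exists_le
    {K : Type*} [Field K] {Γ₀ : Type*} [LinearOrderedCommGroupWithZero Γ₀]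
    [Valued K Γ₀]
    {K₁ : Type*} [Field K₁] [Algebra K K₁] [FiniteDimensional K K₁]
    {Γ₁ : Type*} [LinearOrderedCommGroupWithZero Γ₁]
    (f : Γ₀ →*₀ Γ₁)
    (v₁ : Valuation K₁ Γ₁)
    (hext : ∀ x : K, v₁ (algebraMap K K₁ x) = f (Valued.v x))
    (hsurj₁ : ∀ γ : Γ₁ˣ, ∃ x : K₁, v₁ x = (γ : Γ₁))
    (t : Γ₁ˣ) : ∃ ε : Γ₀ˣ, f ε ≤ (t : Γ₁) := by
  classical
  have hfne : ∀ a : Γ₀, a ≠ 0 → f a ≠ 0 := by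
    intro a ha h0
    have : f a * f a⁻¹ = 1 := by
      rw [← map_mul, mul_inv_cancel₀ ha, map_one]
    rw [h0, zero_mul] at this
    exact zero_ne_one this
  rcases le_or_gt 1 (t : Γ₁) with ht | ht
  · exact ⟨1, by simpa using ht⟩
  -- t < 1
  have claim : ∃ k : ℕ, 1 ≤ k ∧ ∃ x : K, x ≠ 0 ∧ f (Valued.v x) = (t : Γ₁) ^ k := by
    by_contra hcl
    push_neg at hcl
    set d := Module.finrank K K₁ with hd
    choose z hz using fun i : Fin (d + 1) => hsurj₁ (t ^ (i.val + 1))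
    have hzval : ∀ i, v₁ (z i) = (t : Γ₁) ^ (i.val + 1) := by
      intro i; rw [hz i, Units.val_pow_eq_pow_val]
    have hind : LinearIndependent K z := by
      rw [Fintype.linearIndependent_iff]
      intro g hg
      by_contra hne
      push_neg at hne
      obtain ⟨i₁, hi₁⟩ := hne
      set s : Finset (Fin (d + 1)) := univ.filter (fun i => g i ≠ 0) with hs
      have hsne : s.Nonempty := ⟨i₁, by simp [hs, hi₁]⟩
      set T : Fin (d + 1) → K₁ := fun i => g i • z i with hT
      have hTval : ∀ i, v₁ (T i) = f (Valued.v (g i)) * (t : Γ₁) ^ (i.val + 1) := by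
        intro i
        rw [hT]
        simp only
        rw [Algebra.smul_def, map_mul, hext, hzval]
      have hTne : ∀ i ∈ s, v₁ (T i) ≠ 0 := by
        intro i hi
        rw [hTval]
        have hgi : g i ≠ 0 := by simpa [hs] using hi
        have h1 : Valued.v (g i) ≠ 0 := (Valuation.ne_zero_iff _).2 hgi
        exact mul_ne_zero (hfne _ h1) (pow_ne_zero _ t.ne_zero)
      have hdist : ∀ i ∈ s, ∀ j ∈ s, i ≠ j → v₁ (T i) ≠ v₁ (T j) := by
        intro i hi j hj hij
        have main : ∀ i j : Fin (d+1), g i ≠ 0 → g j ≠ 0 → i.val < j.val →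
            v₁ (T i) ≠ v₁ (T j) := by
          intro i j hgi hgj hlt heq
          rw [hTval, hTval] at heq
          have hvi : Valued.v (g i) ≠ 0 := (Valuation.ne_zero_iff _).2 hgi
          have hvj : Valued.v (g j) ≠ 0 := (Valuation.ne_zero_iff _).2 hgj
          have hfj : f (Valued.v (g j)) ≠ 0 := hfne _ hvj
          have ht0 : ((t:Γ₁) ^ (i.val+1)) ≠ 0 := pow_ne_zero _ t.ne_zero
          have hk : f (Valued.v (g i / g j)) = (t : Γ₁) ^ (j.val - i.val) := by
            have e1 : (t:Γ₁) ^ (j.val + 1) = (t:Γ₁) ^ (i.val+1) * (t:Γ₁) ^ (j.val - i.val) := by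
              rw [← pow_add]
              congr 1
              omega
            rw [Valuation.map_div, map_div₀, div_eq_iff hfj]
            apply mul_left_cancel₀ ht0
            rw [mul_comm ((t:Γ₁)^(i.val+1)) (f (Valued.v (g i))), heq, e1]
            rw [mul_left_comm, mul_comm (f (Valued.v (g j)))]
          exact hcl (j.val - i.val) (by omega) (g i / g j) (div_ne_zero hgi hgj) hk
        have hgi : g i ≠ 0 := by simpa [hs] using hi
        have hgj : g j ≠ 0 := by simpa [hs] using hj
        rcases lt_or_gt_of_ne (fun h : i.val = j.val => hij (Fin.ext h)) with h | h
        · exact main i j hgi hgj h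
        · exact fun heq => (main j i hgj hgi h) heq.symm
      obtain ⟨i₀, hi₀s, hmax⟩ := s.exists_max_image (fun i => v₁ (T i)) hsne
      have hsum : ∑ i ∈ s, T i = 0 := by
        rw [← hg]
        refine Finset.sum_subset (Finset.subset_univ s) ?_
        intro i _ his
        have : g i = 0 := by
          by_contra h; exact his (by simp [hs, h])
        simp [hT, this]
      have hsplit : T i₀ = -∑ i ∈ s.erase i₀, T i := by
        have h2 := Finset.add_sum_erase s T hi₀s
        rw [hsum] at h2
        exact eq_neg_of_add_eq_zero_left h2
      have hlt : v₁ (∑ i ∈ s.erase i₀, T i) < v₁ (T i₀) := by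
        refine Valuation.map_sum_lt _ (hTne i₀ hi₀s) ?_
        intro i hi
        have his : i ∈ s := Finset.mem_of_mem_erase hi
        have hine : i ≠ i₀ := Finset.ne_of_mem_erase hi
        exact lt_of_le_of_ne (hmax i his) (hdist i his i₀ hi₀s hine)
      rw [hsplit, Valuation.map_neg] at hlt
      exact lt_irrefl _ hlt
    have hcard := hind.fintype_card_le_finrank
    simp only [Fintype.card_fin] at hcard
    omega
  obtain ⟨k, hk1, x, hx0, hxv⟩ := claim
  have hvx : Valued.v x ≠ 0 := (Valuation.ne_zero_iff _).2 hx0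
  refine ⟨Units.mk0 (Valued.v x) hvx, ?_⟩
  simp only [Units.val_mk0, hxv]
  calc (t : Γ₁) ^ k = (t:Γ₁) ^ (k-1) * t := by rw [← pow_succ]; congr 1; omega
  _ ≤ 1 * (t : Γ₁) := mul_le_mul_left (pow_le_one' ht.le _) _
  _ = t := one_mul _

lemma aux_coord_bound
    {K : Type*} [Field K] {Γ₀ : Type*} [LinearOrderedCommGroupWithZero Γ₀]
    [Valued K Γ₀] [CompleteSpace K]
    {K₁ : Type*} [Field K₁] [Algebra K K₁]
    {Γ₁ : Type*} [LinearOrderedCommGroupWithZero Γ₁]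
    (f : Γ₀ →*₀ Γ₁) (hf : StrictMono f)
    (v₁ : Valuation K₁ Γ₁)
    (hext : ∀ x : K, v₁ (algebraMap K K₁ x) = f (Valued.v x))
    (hA : ∀ t : Γ₁ˣ, ∃ ε : Γ₀ˣ, f ε ≤ (t : Γ₁))
    (hsurj : ∀ γ : Γ₀ˣ, ∃ x : K, Valued.v x = (γ : Γ₀)) :
    ∀ (n : ℕ) (e : Fin n → K₁), LinearIndependent K e →
      ∃ c : Γ₁ˣ, ∀ (x : Fin n → K) (i : Fin n),
        f (Valued.v (x i)) ≤ (c : Γ₁) * v₁ (∑ j, x j • e j) := by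
  classical
  have hfne : ∀ a : Γ₀, a ≠ 0 → f a ≠ 0 := by
    intro a ha h0
    have : f a * f a⁻¹ = 1 := by rw [← map_mul, mul_inv_cancel₀ ha, map_one]
    rw [h0, zero_mul] at this
    exact zero_ne_one this
  have hsmul : ∀ (x : K) (z : K₁), v₁ (x • z) = f (Valued.v x) * v₁ z := by
    intro x z
    rw [Algebra.smul_def, map_mul, hext]
  intro n
  induction n with
  | zero => exact fun e _ => ⟨1, fun x i => i.elim0⟩
  | succ n ih =>
    have key : ∀ (e : Fin (n+1) → K₁), LinearIndependent K e →
        ∃ δ : Γ₁ˣ, ∀ x : Fin (n+1) → K,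
          f (Valued.v (x (Fin.last n))) ≤ (δ : Γ₁) * v₁ (∑ j, x j • e j) := by
      intro e he
      have he' : LinearIndependent K (fun j : Fin n => e j.castSucc) :=
        he.comp Fin.castSucc (Fin.castSucc_injective n)
      obtain ⟨c, hc⟩ := ih (fun j : Fin n => e j.castSucc) he'
      have hsum_sub : ∀ y y' : Fin n → K,
          (∑ j, (y j - y' j) • e j.castSucc) =
            (∑ j, y j • e j.castSucc) - (∑ j, y' j • e j.castSucc) := by
        intro y y'
        rw [← Finset.sum_sub_distrib]
        exact Finset.sum_congr rfl fun j _ => sub_smul _ _ _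
      have final : ∀ a : Fin n → K,
          e (Fin.last n) + (∑ j, a j • e j.castSucc) = 0 → False := by
        intro a ha
        have hzero := Fintype.linearIndependent_iff.1 he
          (fun i => Fin.lastCases 1 a i) ?_ (Fin.last n)
        · simp at hzero
        · rw [Fin.sum_univ_castSucc]
          simp only [Fin.lastCases_castSucc, Fin.lastCases_last, one_smul]
          rw [add_comm]
          exact ha
      have main : ∃ δ₀ : Γ₁ˣ, ∀ y : Fin n → K,
          (δ₀ : Γ₁) ≤ v₁ (e (Fin.last n) + ∑ j, y j • e j.castSucc) := by
        by_contra hcon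
        push_neg at hcon
        by_cases hNT : ∃ s : Γ₁ˣ, (s : Γ₁) < 1
        case neg =>
          push_neg at hNT
          obtain ⟨y, hy⟩ := hcon 1
          have hy0 : v₁ (e (Fin.last n) + ∑ j, y j • e j.castSucc) = 0 := by
            by_contra h0
            exact absurd (hNT (Units.mk0 _ h0)) (not_le.2 hy)
          exact final y ((Valuation.zero_iff _).1 hy0)
        case pos =>
        obtain ⟨s1, hs1⟩ := hNT
        set B : Γ₁ˣ → Set (Fin n → K) :=
          fun δ => {y | v₁ (e (Fin.last n) + ∑ j, y j • e j.castSucc) < δ} with hBdef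
        have hBmono : ∀ {δ δ' : Γ₁ˣ}, δ ≤ δ' → B δ ⊆ B δ' := by
          intro δ δ' h y hy
          exact lt_of_lt_of_le hy (by exact_mod_cast h)
        have hBne : ∀ δ, (B δ).Nonempty := fun δ => hcon δ
        set F : Filter (Fin n → K) := ⨅ δ : Γ₁ˣ, Filter.principal (B δ) with hFdef
        have hdir : Directed (· ≥ ·) (fun δ : Γ₁ˣ => Filter.principal (B δ)) := by
          intro δ₁ δ₂
          exact ⟨min δ₁ δ₂, Filter.principal_mono.2 (hBmono (min_le_left _ _)),
            Filter.principal_mono.2 (hBmono (min_le_right _ _))⟩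
        have hFne : F.NeBot :=
          Filter.iInf_neBot_of_directed hdir
            (fun δ => Filter.principal_neBot_iff.mpr (hBne δ))
        have hFmem : ∀ δ, B δ ∈ F := fun δ => Filter.mem_iInf_of_mem δ (Filter.mem_principal_self _)
        have hFex : ∀ s ∈ F, ∃ δ, B δ ⊆ s := by
          intro s hs
          rw [Filter.mem_iInf_of_directed hdir] at hs
          exact hs
        have hsub_lt : ∀ (δ : Γ₁ˣ) (y₁ y₂ : Fin n → K), y₁ ∈ B δ → y₂ ∈ B δ →
            v₁ (∑ j, (y₂ j - y₁ j) • e j.castSucc) < δ := by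
          intro δ y₁ y₂ h1 h2
          rw [hsum_sub]
          have heq : (∑ j, y₂ j • e j.castSucc) - (∑ j, y₁ j • e j.castSucc) =
              (e (Fin.last n) + ∑ j, y₂ j • e j.castSucc) -
                (e (Fin.last n) + ∑ j, y₁ j • e j.castSucc) := by ring
          rw [heq]
          exact lt_of_le_of_lt (v₁.map_sub _ _) (max_lt h2 h1)
        have hCau : ∀ j : Fin n, Cauchy (F.map (fun y => y j)) := by
          intro j
          rw [Valued.cauchy_iff]
          refine ⟨Filter.NeBot.map hFne _, ?_⟩
          intro γ'
          obtain ⟨γ, hγ⟩ : ∃ γ : Γ₀ˣ, (γ : Γ₀) = MonoidWithZeroHom.ValueGroup₀.embedding γ'.1 :=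
            ⟨Units.mk0 _ ((map_ne_zero _).2 γ'.ne_zero), rfl⟩
          set δ : Γ₁ˣ := c⁻¹ * (Units.mk0 (f γ) (hfne _ γ.ne_zero)) * s1 with hδdef
          refine ⟨(fun y => y j) '' (B δ), Filter.image_mem_map (hFmem δ), ?_⟩
          rintro _ ⟨y₁, hy₁, rfl⟩ _ ⟨y₂, hy₂, rfl⟩
          have h1 : f (Valued.v (y₂ j - y₁ j)) ≤ (c : Γ₁) * v₁ (∑ j', (y₂ j' - y₁ j') • e j'.castSucc) := by
            have := hc (y₂ - y₁) j
            simpa using this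
          have h2 : (c : Γ₁) * v₁ (∑ j', (y₂ j' - y₁ j') • e j'.castSucc) ≤ (c : Γ₁) * (δ : Γ₁) :=
            mul_le_mul_right (le_of_lt (hsub_lt δ y₁ y₂ hy₁ hy₂)) _
          have h3 : (c : Γ₁) * (δ : Γ₁) = f γ * (s1 : Γ₁) := by
            have hu : (c * δ : Γ₁ˣ) = Units.mk0 (f ↑γ) (hfne _ γ.ne_zero) * s1 := by
              rw [hδdef]; group
            calc (c : Γ₁) * (δ : Γ₁) = ((c * δ : Γ₁ˣ) : Γ₁) := (Units.val_mul _ _).symm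
              _ = f ↑γ * (s1 : Γ₁) := by rw [hu]; simp
          have h4 : f ↑γ * (s1 : Γ₁) < f ↑γ := by
            have : (Units.mk0 (f ↑γ) (hfne _ γ.ne_zero)) * s1 < (Units.mk0 (f ↑γ) (hfne _ γ.ne_zero)) := by
              exact mul_lt_of_lt_one_right' _ (by exact_mod_cast hs1)
            exact_mod_cast this
          have h5 : f (Valued.v (y₂ j - y₁ j)) < f ↑γ :=
            lt_of_le_of_lt (h1.trans (h2.trans_eq h3)) h4
          rw [Valuation.restrict_lt_iff_lt_embedding, ← hγ]
          exact hf.lt_iff_lt.1 h5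
        choose a ha using fun j => CompleteSpace.complete (hCau j)
        have hclose : ∀ (j : Fin n) (ε : Γ₀ˣ), ∃ δ : Γ₁ˣ, ∀ y ∈ B δ,
            Valued.v (y j - a j) < (ε : Γ₀) := by
          intro j ε
          have h1 : {x : K | Valued.v (x - a j) < (ε : Γ₀)} ∈ nhds (a j) := by
            obtain ⟨x₀, hx₀⟩ := hsurj ε
            have hx0 : x₀ ≠ 0 := by
              rintro rfl
              rw [map_zero] at hx₀
              exact ε.ne_zero hx₀.symm
            have hx₀' : Valued.v.restrict x₀ ≠ 0 := by simpa using hx0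
            refine Valued.mem_nhds.2 ⟨Units.mk0 _ hx₀', fun y hy => ?_⟩
            simp only [Set.mem_setOf_eq, Units.val_mk0] at hy ⊢
            rw [← hx₀]
            exact Valued.v.restrict_lt_iff.mp hy
          have h2 := ha j h1
          rw [Filter.mem_map] at h2
          obtain ⟨δ, hδ⟩ := hFex _ h2
          exact ⟨δ, fun y hy => hδ hy⟩
        set w : K₁ := e (Fin.last n) + ∑ j, a j • e j.castSucc with hwdef
        have hw : w ≠ 0 := fun h0 => final a h0
        set γw : Γ₁ˣ := Units.mk0 (v₁ w) ((Valuation.ne_zero_iff _).2 hw) with hγwdef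
        set E : Γ₁ := (insert (1 : Γ₁) (univ.image fun j : Fin n => v₁ (e j.castSucc))).max'
          ⟨1, Finset.mem_insert_self _ _⟩ with hEdef
        have hE1 : (1 : Γ₁) ≤ E := Finset.le_max' _ _ (Finset.mem_insert_self _ _)
        have hE0 : E ≠ 0 := ne_of_gt (lt_of_lt_of_le zero_lt_one hE1)
        have hEb : ∀ j : Fin n, v₁ (e j.castSucc) ≤ E := fun j =>
          Finset.le_max' (insert (1 : Γ₁) (univ.image fun j : Fin n => v₁ (e j.castSucc)))
            (v₁ (e j.castSucc)) (Finset.mem_insert_of_mem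
              (Finset.mem_image_of_mem _ (Finset.mem_univ j)))
        set Eu : Γ₁ˣ := Units.mk0 E hE0 with hEudef
        obtain ⟨ε₀, hε₀⟩ := hA (γw * Eu⁻¹ * s1)
        choose D hD using fun j => hclose j ε₀
        have hcomb : ∃ δ : Γ₁ˣ, δ ≤ γw ∧ ∀ j, δ ≤ D j := by
          refine ⟨(insert γw (univ.image D)).min' ⟨γw, Finset.mem_insert_self _ _⟩,
            Finset.min'_le _ _ (Finset.mem_insert_self _ _), fun j => Finset.min'_le _ _ ?_⟩
          exact Finset.mem_insert_of_mem (Finset.mem_image_of_mem _ (Finset.mem_univ j))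
        obtain ⟨δ, hδγ, hδD⟩ := hcomb
        obtain ⟨y, hy⟩ := hBne δ
        have bound1 : v₁ (e (Fin.last n) + ∑ j, y j • e j.castSucc) < v₁ w := by
          refine lt_of_lt_of_le hy ?_
          exact_mod_cast hδγ
        have bound2 : v₁ (∑ j, (a j - y j) • e j.castSucc) < v₁ w := by
          refine Valuation.map_sum_lt _ γw.ne_zero ?_
          intro j _
          have hterm : v₁ ((a j - y j) • e j.castSucc) =
              f (Valued.v (a j - y j)) * v₁ (e j.castSucc) := hsmul _ _
          have hvclose : Valued.v (a j - y j) < (ε₀ : Γ₀) := by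
            rw [Valuation.map_sub_swap]
            exact hD j y (hBmono (hδD j) hy)
          have h1 : f (Valued.v (a j - y j)) ≤ f ↑ε₀ := le_of_lt (hf hvclose)
          have h2 : v₁ ((a j - y j) • e j.castSucc) ≤ f ↑ε₀ * E := by
            rw [hterm]
            exact mul_le_mul' h1 (hEb j)
          have h3 : f ↑ε₀ * E ≤ ((γw : Γ₁) * (Eu : Γ₁)⁻¹ * (s1 : Γ₁)) * E :=
            mul_le_mul_left hε₀ _
          have h4 : ((γw : Γ₁) * (Eu : Γ₁)⁻¹ * (s1 : Γ₁)) * E = (γw : Γ₁) * (s1 : Γ₁) := by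
            have : ((γw * Eu⁻¹ * s1) * Eu : Γ₁ˣ) = γw * s1 := by
              rw [mul_right_comm, inv_mul_cancel_right]
            calc ((γw : Γ₁) * (Eu : Γ₁)⁻¹ * (s1 : Γ₁)) * E
                = ((γw * Eu⁻¹ * s1) * Eu : Γ₁ˣ) := by
                  simp [Units.val_mul, hEudef]
              _ = ((γw * s1 : Γ₁ˣ) : Γ₁) := by rw [this]
              _ = (γw : Γ₁) * (s1 : Γ₁) := by simp [Units.val_mul]
          have h5 : (γw : Γ₁) * (s1 : Γ₁) < (γw : Γ₁) := by
            have : γw * s1 < γw := mul_lt_of_lt_one_right' _ (by exact_mod_cast hs1)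
            exact_mod_cast this
          calc v₁ ((a j - y j) • e j.castSucc) ≤ f ↑ε₀ * E := h2
            _ ≤ (γw : Γ₁) * (s1 : Γ₁) := h3.trans_eq h4
            _ < (γw : Γ₁) := h5
            _ = v₁ w := rfl
        have hw2 : w = (e (Fin.last n) + ∑ j, y j • e j.castSucc) +
            ∑ j, (a j - y j) • e j.castSucc := by
          rw [hwdef, hsum_sub]
          ring
        have : v₁ w < v₁ w := by
          calc v₁ w ≤ max (v₁ (e (Fin.last n) + ∑ j, y j • e j.castSucc))
                (v₁ (∑ j, (a j - y j) • e j.castSucc)) := by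
                rw [hw2]; exact v₁.map_add _ _
            _ < v₁ w := max_lt bound1 bound2
        exact lt_irrefl _ this
      obtain ⟨δ₀, hδ₀⟩ := main
      refine ⟨δ₀⁻¹, fun x => ?_⟩
      by_cases hxl : x (Fin.last n) = 0
      · rw [hxl]
        simp
      · have hterm : ∀ j : Fin n, x (Fin.last n) • ((x j.castSucc / x (Fin.last n)) • e j.castSucc)
            = x j.castSucc • e j.castSucc := by
          intro j
          rw [smul_smul]
          congr 1
          field_simp
        have hfac : (∑ j, x j • e j) = x (Fin.last n) •
            (e (Fin.last n) + ∑ j : Fin n, (x j.castSucc / x (Fin.last n)) • e j.castSucc) := by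
          rw [Fin.sum_univ_castSucc, smul_add, Finset.smul_sum]
          rw [add_comm]
          congr 1
          exact (Finset.sum_congr rfl fun j _ => (hterm j)).symm
        have h1 : (δ₀ : Γ₁) * f (Valued.v (x (Fin.last n))) ≤ v₁ (∑ j, x j • e j) := by
          rw [hfac, hsmul, mul_comm]
          exact mul_le_mul_right (hδ₀ _) _
        calc f (Valued.v (x (Fin.last n)))
            = ((δ₀⁻¹ : Γ₁ˣ) : Γ₁) * ((δ₀ : Γ₁) * f (Valued.v (x (Fin.last n)))) := by
              rw [← mul_assoc, Units.inv_mul, one_mul]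
          _ ≤ ((δ₀⁻¹ : Γ₁ˣ) : Γ₁) * v₁ (∑ j, x j • e j) := mul_le_mul_right h1 _
    intro e he
    choose δs hδs using fun i : Fin (n+1) =>
      key (e ∘ Equiv.swap (Fin.last n) i) (he.comp _ (Equiv.swap (Fin.last n) i).injective)
    refine ⟨univ.sup' Finset.univ_nonempty δs, fun x i => ?_⟩
    have h1 := hδs i (x ∘ Equiv.swap (Fin.last n) i)
    have h2 : (x ∘ Equiv.swap (Fin.last n) i) (Fin.last n) = x i := by
      simp [Equiv.swap_apply_left]
    have h3 : (∑ j, (x ∘ Equiv.swap (Fin.last n) i) j • (e ∘ Equiv.swap (Fin.last n) i) j)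
        = ∑ j, x j • e j :=
      Equiv.sum_comp (Equiv.swap (Fin.last n) i) (fun j => x j • e j)
    rw [h2, h3] at h1
    refine h1.trans (mul_le_mul_left ?_ _)
    exact_mod_cast Finset.le_sup' δs (Finset.mem_univ i)

/-- Let `K` be a field complete for a valuation with value group `Γ₀ˣ`, `K₁/K` a finite
extension of degree `d` with valuation `v₁` extending the one on `K` (via `f`), and let
`(e₁ = 1, e₂, …, e_d)` be a `K`-basis of `K₁` consisting of elements of the valuation ring
of `v₁` (e.g. an `R`-basis of `R₀ = R[ℬ]`).  Defining `ord₀(∑ xᵢeᵢ) = minᵢ ord(xᵢ)`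
(multiplicatively: `v₀ z = maxᵢ v(xᵢ)`), the function `ord₁ − ord₀` is bounded on `K₁*`:
there are `γ, γ' ∈ Γ₁ˣ` with `γ·v₀(z) ≤ v₁(z) ≤ γ'·v₀(z)` for all `z ≠ 0`. -/
theorem ord_one_sub_ord_zero_bounded
    (K : Type*) [Field K] (Γ₀ : Type*) [LinearOrderedCommGroupWithZero Γ₀]
    [Valued K Γ₀] [CompleteSpace K]
    (hsurj : ∀ γ : Γ₀ˣ, ∃ x : K, Valued.v x = (γ : Γ₀))
    (K₁ : Type*) [Field K₁] [Algebra K K₁] [FiniteDimensional K K₁]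
    (hd : 0 < Module.finrank K K₁)
    (Γ₁ : Type*) [LinearOrderedCommGroupWithZero Γ₁]
    (f : Γ₀ →*₀ Γ₁) (hf : StrictMono f)
    (v₁ : Valuation K₁ Γ₁)
    (hext : ∀ x : K, v₁ (algebraMap K K₁ x) = f (Valued.v x))
    (hsurj₁ : ∀ γ : Γ₁ˣ, ∃ x : K₁, v₁ x = (γ : Γ₁))
    (b : Module.Basis (Fin (Module.finrank K K₁)) K K₁)
    (hb1 : b ⟨0, hd⟩ = 1)
    (hbint : ∀ i, v₁ (b i) ≤ 1) :
    ∃ γlo γhi : Γ₁ˣ, ∀ z : K₁, z ≠ 0 →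
      (γlo : Γ₁) * (Finset.univ.sup' ⟨⟨0, hd⟩, Finset.mem_univ _⟩ (fun i => f (Valued.v (b.repr z i)))) ≤ v₁ z ∧
      v₁ z ≤ (γhi : Γ₁) * (Finset.univ.sup' ⟨⟨0, hd⟩, Finset.mem_univ _⟩ (fun i => f (Valued.v (b.repr z i)))) := by
  classical
  have hsmul : ∀ (x : K) (z : K₁), v₁ (x • z) = f (Valued.v x) * v₁ z := by
    intro x z
    rw [Algebra.smul_def, map_mul, hext]
  have hA : ∀ t : Γ₁ˣ, ∃ ε : Γ₀ˣ, f ε ≤ (t : Γ₁) := fun t =>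
    aux_exists_le f v₁ hext hsurj₁ t
  obtain ⟨c, hcb⟩ := aux_coord_bound f hf v₁ hext hA hsurj (Module.finrank K K₁)
    b b.linearIndependent
  refine ⟨c⁻¹, 1, fun z hz => ?_⟩
  have hrepr : (∑ j, b.repr z j • b j) = z := b.sum_repr z
  constructor
  · have hsup : (Finset.univ.sup' ⟨⟨0, hd⟩, Finset.mem_univ _⟩
        (fun i => f (Valued.v (b.repr z i)))) ≤ (c : Γ₁) * v₁ z := by
      refine Finset.sup'_le _ _ fun i _ => ?_
      have h := hcb (fun j => b.repr z j) i
      simpa [hrepr] using h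
    calc ((c⁻¹ : Γ₁ˣ) : Γ₁) * (Finset.univ.sup' ⟨⟨0, hd⟩, Finset.mem_univ _⟩
          (fun i => f (Valued.v (b.repr z i))))
        ≤ ((c⁻¹ : Γ₁ˣ) : Γ₁) * ((c : Γ₁) * v₁ z) := mul_le_mul_right hsup _
      _ = v₁ z := by rw [← mul_assoc, Units.inv_mul, one_mul]
  · rw [Units.val_one, one_mul]
    calc v₁ z = v₁ (∑ j, b.repr z j • b j) := by rw [hrepr]
      _ ≤ (Finset.univ.sup' ⟨⟨0, hd⟩, Finset.mem_univ _⟩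
          (fun i => f (Valued.v (b.repr z i)))) := by
        refine v₁.map_sum_le fun j _ => ?_
        rw [hsmul]
        calc f (Valued.v (b.repr z j)) * v₁ (b j)
            ≤ f (Valued.v (b.repr z j)) * 1 := mul_le_mul_right (hbint j) _
          _ = f (Valued.v (b.repr z j)) := mul_one _
          _ ≤ _ := Finset.le_sup' (fun i => f (Valued.v (b.repr z i))) (Finset.mem_univ j)
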